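/- For n ≥ 1 and 0 ≤ q < 1, the commutator ideal I_n of the quantum sphere algebra A(S^{2n+1}_q) equals the two-sided *-ideal generated by the generators z₁, …, z_n. -/

import Mathlib

noncomputable section

namespace QAlg

/-- Generators of a free *-algebra: `inl i` is the generator `z i`, and
`inr i` is its formal adjoint `(z i)*`. -/
abbrev Gen (X : Type) := X ⊕ X

/-- The free algebra on the doubled generating set, realized as the monoid
algebra of the free monoid. -/
abbrev F (X : Type) := MonoidAlgebra ℂ (FreeMonoid (Gen X))

/-- The *-operation on words: reverse the word and exchange the two copies
of the generators. -/
def wordStar {X : Type} (w : FreeMonoid (Gen X)) : FreeMonoid (Gen X) :=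
  FreeMonoid.ofList (((FreeMonoid.toList w).map Sum.swap).reverse)

lemma wordStar_mul {X : Type} (w v : FreeMonoid (Gen X)) :
    wordStar (w * v) = wordStar v * wordStar w := by
  simp [wordStar, FreeMonoid.toList_mul, FreeMonoid.ofList_append]

lemma wordStar_wordStar {X : Type} (w : FreeMonoid (Gen X)) : wordStar (wordStar w) = w := by
  simp [wordStar, List.map_reverse, List.map_map, Sum.swap_swap_eq]

/-- The canonical conjugate-linear antimultiplicative involution on the free
algebra `F X`, determined by `star (z i) = (z i)*` and complex conjugation
on scalars. -/
def starF {X : Type} (f : F X) : F X :=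
  Finsupp.sum f.coeff fun w c => MonoidAlgebra.single (wordStar w) ((starRingEnd ℂ) c)

lemma starF_single {X : Type} (w : FreeMonoid (Gen X)) (c : ℂ) :
    starF (MonoidAlgebra.single w c) = MonoidAlgebra.single (wordStar w) ((starRingEnd ℂ) c) := by
  classical
  unfold starF
  rw [MonoidAlgebra.coeff_single]
  refine Finsupp.sum_single_index ?_
  simp

lemma starF_zero {X : Type} : starF (0 : F X) = 0 := by
  unfold starF
  exact Finsupp.sum_zero_index

lemma starF_add {X : Type} (f g : F X) : starF (f + g) = starF f + starF g := by
  classical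
  unfold starF
  rw [MonoidAlgebra.coeff_add]
  refine Finsupp.sum_add_index' (fun w => by simp) (fun w c₁ c₂ => by
    simp [map_add, MonoidAlgebra.single_add])

lemma starF_single_mul {X : Type} (w : FreeMonoid (Gen X)) (c : ℂ) (g : F X) :
    starF (MonoidAlgebra.single w c * g) = starF g * starF (MonoidAlgebra.single w c) := by
  classical
  induction g using MonoidAlgebra.induction with
  | zero => simp [starF_zero]
  | single_add v d g _ _ ihg =>
    rw [mul_add, starF_add, starF_add, add_mul, ihg]
    congr 1
    rw [MonoidAlgebra.single_mul_single, starF_single, starF_single, starF_single,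
      MonoidAlgebra.single_mul_single, wordStar_mul, map_mul, mul_comm]

lemma starF_mul {X : Type} (f g : F X) : starF (f * g) = starF g * starF f := by
  classical
  induction f using MonoidAlgebra.induction with
  | zero => simp [starF_zero]
  | single_add w c f _ _ ih =>
    rw [add_mul, starF_add, starF_add, ih, mul_add, starF_single_mul]

lemma starF_starF {X : Type} (f : F X) : starF (starF f) = f := by
  classical
  induction f using MonoidAlgebra.induction with
  | zero => simp [starF_zero]
  | single_add w c f _ _ ih =>
    rw [starF_add, starF_add, ih, starF_single, starF_single, wordStar_wordStar,
      Complex.conj_conj]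

/-- The free *-algebra structure on `F X`. -/
def starRingF (X : Type) : StarRing (F X) where
  star := starF
  star_involutive := starF_starF
  star_mul := starF_mul
  star_add := starF_add

/-- The generator `z i` inside the free *-algebra. -/
def zF {X : Type} (i : X) : F X := MonoidAlgebra.of ℂ _ (FreeMonoid.of (Sum.inl i))

/-- The formal adjoint `(z i)*` inside the free *-algebra. -/
def zsF {X : Type} (i : X) : F X := MonoidAlgebra.of ℂ _ (FreeMonoid.of (Sum.inr i))

/-- The defining relations of the Vaksman-Soibelman quantum sphere
`S^{2n+1}_q` (with `zsF i` playing the role of `(z i)*`), together with their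
images under the *-operation, so that the quotient below is the universal
unital *-algebra on the generators `z 0, ..., z n` with these relations. -/
inductive srel (n : ℕ) (q : ℝ) : F (Fin (n + 1)) → F (Fin (n + 1)) → Prop
  | comm_zz {i j : Fin (n + 1)} (h : i < j) :
      srel n q (zF j * zF i) ((q : ℂ) • (zF i * zF j))
  | comm_zsz {i j : Fin (n + 1)} (h : i ≠ j) :
      srel n q (zsF i * zF j) ((q : ℂ) • (zF j * zsF i))
  | ccr (i : Fin (n + 1)) :
      srel n q (zsF i * zF i)
        (zF i * zsF i + ((1 - q ^ 2 : ℝ) : ℂ) • ∑ j ∈ Finset.Ioi i, zF j * zsF j)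
  | sphere_eq : srel n q (∑ j, zF j * zsF j) 1
  | star_rel {a b} : srel n q a b → srel n q (starF a) (starF b)

/-- The coordinate *-algebra `A(S^{2n+1}_q)` of the quantum sphere. -/
abbrev Sphere (n : ℕ) (q : ℝ) := RingQuot (srel n q)

noncomputable instance (n : ℕ) (q : ℝ) : StarRing (Sphere n q) :=
  @RingQuot.starRing _ _ (starRingF _) (srel n q) (fun _ _ h => srel.star_rel h)

/-- The generator `z i` of the quantum sphere algebra. -/
def z (n : ℕ) (q : ℝ) (i : Fin (n + 1)) : Sphere n q :=
  RingQuot.mkAlgHom ℂ (srel n q) (zF i)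

/-- The commutator ideal of a ring: the two-sided ideal generated by all
commutators `a * b - b * a`.  For a *-algebra this coincides with the
two-sided *-ideal generated by the commutators, since the star of a
commutator is again a commutator. -/
def commutatorIdeal (A : Type) [Ring A] : TwoSidedIdeal A :=
  TwoSidedIdeal.span {x | ∃ a b : A, x = a * b - b * a}


section Aux
variable (n : ℕ) (q : ℝ)

lemma mk_eq (f : F (Fin (n+1))) : RingQuot.mkAlgHom ℂ (srel n q) f = ⟨Quot.mk _ f⟩ := by
  rw [RingQuot.mkAlgHom_def]
  show (RingQuot.mkRingHom (srel n q)) f = _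
  rw [RingQuot.mkRingHom_def]
  rfl

lemma star_mk (f : F (Fin (n+1))) :
    star (RingQuot.mkAlgHom ℂ (srel n q) f) = RingQuot.mkAlgHom ℂ (srel n q) (starF f) := by
  rw [mk_eq, mk_eq]
  letI : StarRing (F (Fin (n+1))) := starRingF _
  rfl

lemma star_z (i : Fin (n+1)) :
    star (z n q i) = RingQuot.mkAlgHom ℂ (srel n q) (zsF i) := by
  rw [z, star_mk]
  congr 1
  show starF (MonoidAlgebra.single (FreeMonoid.of (Sum.inl i)) 1) = _
  rw [starF_single]
  simp only [map_one, wordStar, FreeMonoid.toList_of, List.map_cons, List.map_nil,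
    List.reverse_cons, List.reverse_nil, List.nil_append, FreeMonoid.ofList_singleton]
  rfl

lemma rel_comm_zz {i j : Fin (n+1)} (h : i < j) :
    z n q j * z n q i = (q : ℂ) • (z n q i * z n q j) := by
  have := RingQuot.mkAlgHom_rel ℂ (srel.comm_zz (n := n) (q := q) h)
  rwa [map_mul, map_smul, map_mul] at this

lemma rel_comm_zsz {i j : Fin (n+1)} (h : i ≠ j) :
    star (z n q i) * z n q j = (q : ℂ) • (z n q j * star (z n q i)) := by
  have := RingQuot.mkAlgHom_rel ℂ (srel.comm_zsz (n := n) (q := q) h)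
  rw [map_mul, map_smul, map_mul] at this
  simp only [star_z]
  simp only [z]
  exact this

lemma rel_ccr (i : Fin (n+1)) :
    star (z n q i) * z n q i = z n q i * star (z n q i) +
      ((1 - q ^ 2 : ℝ) : ℂ) • ∑ j ∈ Finset.Ioi i, z n q j * star (z n q j) := by
  have := RingQuot.mkAlgHom_rel ℂ (srel.ccr (n := n) (q := q) i)
  rw [map_mul, map_add, map_mul, map_smul, map_sum] at this
  simp only [map_mul] at this
  simp only [star_z]
  simp only [z]
  exact this

lemma rel_sphere : ∑ j, z n q j * star (z n q j) = 1 := by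
  have := RingQuot.mkAlgHom_rel ℂ (srel.sphere_eq (n := n) (q := q))
  rw [map_sum, map_one] at this
  simp only [map_mul] at this
  simp only [star_z]
  simp only [z]
  exact this

variable {n q}

lemma smul_mem' (I : TwoSidedIdeal (Sphere n q)) (c : ℂ) {x : Sphere n q} (hx : x ∈ I) :
    c • x ∈ I := by
  rw [Algebra.smul_def]; exact I.mul_mem_left _ _ hx

lemma of_smul_mem (I : TwoSidedIdeal (Sphere n q)) {c : ℂ} (hc : c ≠ 0) {x : Sphere n q}
    (h : c • x ∈ I) : x ∈ I := by
  have := smul_mem' I c⁻¹ h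
  rwa [smul_smul, inv_mul_cancel₀ hc, one_smul] at this

lemma star_mem_commutatorIdeal {A : Type} [Ring A] [StarRing A] {x : A}
    (hx : x ∈ commutatorIdeal A) : star x ∈ commutatorIdeal A := by
  let I' : TwoSidedIdeal A := TwoSidedIdeal.mk'
    {y | y ∈ commutatorIdeal A ∧ star y ∈ commutatorIdeal A}
    ⟨TwoSidedIdeal.zero_mem _, by rw [star_zero]; exact TwoSidedIdeal.zero_mem _⟩
    (fun ha hb => ⟨TwoSidedIdeal.add_mem _ ha.1 hb.1,
      by rw [star_add]; exact TwoSidedIdeal.add_mem _ ha.2 hb.2⟩)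
    (fun ha => ⟨TwoSidedIdeal.neg_mem _ ha.1,
      by rw [star_neg]; exact TwoSidedIdeal.neg_mem _ ha.2⟩)
    (fun {a b} hb => ⟨TwoSidedIdeal.mul_mem_left _ _ _ hb.1,
      by rw [star_mul]; exact TwoSidedIdeal.mul_mem_right _ _ _ hb.2⟩)
    (fun {a b} ha => ⟨TwoSidedIdeal.mul_mem_right _ _ _ ha.1,
      by rw [star_mul]; exact TwoSidedIdeal.mul_mem_left _ _ _ ha.2⟩)
  have hsub : {x : A | ∃ a b : A, x = a * b - b * a} ⊆ I' := by
    rintro _ ⟨a, b, rfl⟩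
    rw [SetLike.mem_coe, TwoSidedIdeal.mem_mk']
    refine ⟨TwoSidedIdeal.subset_span ⟨a, b, rfl⟩, ?_⟩
    rw [star_sub, star_mul, star_mul]
    exact TwoSidedIdeal.subset_span ⟨star b, star a, rfl⟩
  have := TwoSidedIdeal.mem_span_iff.mp hx I' hsub
  rw [TwoSidedIdeal.mem_mk'] at this
  exact this.2

end Aux

section Main
variable {n : ℕ} {q : ℝ}

lemma commMem (a b : Sphere n q) : a * b - b * a ∈ commutatorIdeal (Sphere n q) :=
  TwoSidedIdeal.subset_span ⟨a, b, rfl⟩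

lemma zmul_mem (hq1 : q < 1) {i j : Fin (n+1)} (h : i < j) :
    z n q i * z n q j ∈ commutatorIdeal (Sphere n q) := by
  have hc : ((q:ℂ) - 1) ≠ 0 := sub_ne_zero.mpr (by exact_mod_cast hq1.ne)
  apply of_smul_mem _ hc
  have := commMem (z n q j) (z n q i)
  rw [rel_comm_zz n q h] at this
  have e : ((q:ℂ) - 1) • (z n q i * z n q j) = (q:ℂ) • (z n q i * z n q j) - z n q i * z n q j := by
    rw [Algebra.smul_def, Algebra.smul_def, map_sub, map_one, sub_mul, one_mul]
  rw [e]
  exact this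

lemma sumIoi_mem (hq0 : 0 ≤ q) (hq1 : q < 1) (i : Fin (n+1)) :
    (∑ j ∈ Finset.Ioi i, z n q j * star (z n q j)) ∈ commutatorIdeal (Sphere n q) := by
  have h2 : ((1 - q^2 : ℝ) : ℂ) ≠ 0 := by
    rw [Complex.ofReal_ne_zero]; nlinarith
  apply of_smul_mem _ h2
  have := commMem (star (z n q i)) (z n q i)
  rwa [rel_ccr n q i, add_sub_cancel_left] at this

lemma sphere_split :
    (1 : Sphere n q) = z n q 0 * star (z n q 0) +
      ∑ j ∈ Finset.Ioi (0 : Fin (n+1)), z n q j * star (z n q j) := by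
  rw [← rel_sphere n q, ← Finset.add_sum_erase _ _ (Finset.mem_univ 0)]
  congr 1
  apply Finset.sum_congr ?_ (fun _ _ => rfl)
  ext j
  simp only [Finset.mem_erase, Finset.mem_univ, and_true, Finset.mem_Ioi]
  exact (Fin.pos_iff_ne_zero' j).symm

lemma z_mem (hq0 : 0 ≤ q) (hq1 : q < 1) {i : Fin (n+1)} (hi : i ≠ 0) :
    z n q i ∈ commutatorIdeal (Sphere n q) := by
  have h0i : (0 : Fin (n+1)) < i := (Fin.pos_iff_ne_zero' i).mpr hi
  have h1 : z n q i * z n q 0 ∈ commutatorIdeal (Sphere n q) := by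
    rw [rel_comm_zz n q h0i]
    exact smul_mem' _ _ (zmul_mem hq1 h0i)
  have h2 := sumIoi_mem hq0 hq1 (0 : Fin (n+1))
  have key : z n q i = z n q i * z n q 0 * star (z n q 0) +
      z n q i * ∑ j ∈ Finset.Ioi (0 : Fin (n+1)), z n q j * star (z n q j) := by
    conv_lhs => rw [← mul_one (z n q i), sphere_split (n := n) (q := q)]
    rw [mul_add, ← mul_assoc]
  rw [key]
  exact TwoSidedIdeal.add_mem _ (TwoSidedIdeal.mul_mem_right _ _ _ h1)
    (TwoSidedIdeal.mul_mem_left _ _ _ h2)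

end Main

section Gen
variable {n : ℕ} {q : ℝ}

/-- The generating set of the sphere algebra. -/
def G (n : ℕ) (q : ℝ) : Set (Sphere n q) :=
  Set.range (z n q) ∪ Set.range (fun i => star (z n q i))

/-- The generating set of the right-hand-side ideal. -/
def Jset (n : ℕ) (q : ℝ) : Set (Sphere n q) :=
  {x | ∃ i : Fin (n + 1), i ≠ 0 ∧ x = z n q i} ∪
    {x | ∃ i : Fin (n + 1), i ≠ 0 ∧ x = star (z n q i)}

lemma word_mem (l : List (Gen (Fin (n+1)))) :
    RingQuot.mkAlgHom ℂ (srel n q) (MonoidAlgebra.single (FreeMonoid.ofList l) 1) ∈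
      Algebra.adjoin ℂ (G n q) := by
  induction l with
  | nil =>
    have h1 : MonoidAlgebra.single (FreeMonoid.ofList ([] : List (Gen (Fin (n+1))))) (1:ℂ)
        = 1 := rfl
    rw [h1, map_one]; exact one_mem _
  | cons x l ih =>
    have h1 : MonoidAlgebra.single (FreeMonoid.ofList (x :: l)) (1:ℂ) =
        MonoidAlgebra.single (FreeMonoid.of x) 1 * MonoidAlgebra.single (FreeMonoid.ofList l) 1 := by
      rw [MonoidAlgebra.single_mul_single, one_mul]
      rfl
    rw [h1, map_mul]
    refine mul_mem ?_ ih
    cases x with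
    | inl i => exact Algebra.subset_adjoin (Or.inl ⟨i, rfl⟩)
    | inr i => exact Algebra.subset_adjoin (Or.inr ⟨i, star_z n q i⟩)

lemma mem_adjoin (a : Sphere n q) : a ∈ Algebra.adjoin ℂ (G n q) := by
  obtain ⟨f, rfl⟩ := RingQuot.mkAlgHom_surjective ℂ (srel n q) a
  induction f using MonoidAlgebra.induction with
  | zero => rw [map_zero]; exact zero_mem _
  | single_add w c f _ _ ih =>
    rw [map_add]
    refine add_mem ?_ ih
    have h1 : (MonoidAlgebra.single w c : F (Fin (n+1))) = c • MonoidAlgebra.single w (1:ℂ) := by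
      rw [MonoidAlgebra.smul_single', mul_one]
    rw [h1, map_smul]
    have h2 := word_mem (n := n) (q := q) (FreeMonoid.toList w)
    rw [FreeMonoid.ofList_toList] at h2
    exact Subalgebra.smul_mem _ h2 c

lemma zJ {i : Fin (n+1)} (hi : i ≠ 0) : z n q i ∈ TwoSidedIdeal.span (Jset n q) :=
  TwoSidedIdeal.subset_span (Or.inl ⟨i, hi, rfl⟩)

lemma zsJ {i : Fin (n+1)} (hi : i ≠ 0) : star (z n q i) ∈ TwoSidedIdeal.span (Jset n q) :=
  TwoSidedIdeal.subset_span (Or.inr ⟨i, hi, rfl⟩)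

lemma comm_z0 : star (z n q 0) * z n q 0 - z n q 0 * star (z n q 0) ∈
    TwoSidedIdeal.span (Jset n q) := by
  rw [rel_ccr n q 0, add_sub_cancel_left]
  apply smul_mem'
  apply TwoSidedIdeal.finsetSum_mem
  intro j hj
  exact TwoSidedIdeal.mul_mem_right _ _ _
    (zJ ((Fin.pos_iff_ne_zero' j).mp (Finset.mem_Ioi.mp hj)))

lemma base_comm {a b : Sphere n q} (ha : a ∈ G n q) (hb : b ∈ G n q) :
    a * b - b * a ∈ TwoSidedIdeal.span (Jset n q) := by
  have main : ∀ x : Sphere n q, x ∈ G n q → x ∈ TwoSidedIdeal.span (Jset n q) ∨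
      x = z n q 0 ∨ x = star (z n q 0) := by
    rintro x (⟨i, rfl⟩ | ⟨i, rfl⟩)
    · by_cases hi : i = 0
      · subst hi; exact Or.inr (Or.inl rfl)
      · exact Or.inl (zJ hi)
    · by_cases hi : i = 0
      · subst hi; exact Or.inr (Or.inr rfl)
      · exact Or.inl (zsJ hi)
  rcases main a ha with haJ | ha0
  · exact TwoSidedIdeal.sub_mem _ (TwoSidedIdeal.mul_mem_right _ _ _ haJ)
      (TwoSidedIdeal.mul_mem_left _ _ _ haJ)
  rcases main b hb with hbJ | hb0
  · exact TwoSidedIdeal.sub_mem _ (TwoSidedIdeal.mul_mem_left _ _ _ hbJ)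
      (TwoSidedIdeal.mul_mem_right _ _ _ hbJ)
  rcases ha0 with rfl | rfl <;> rcases hb0 with rfl | rfl
  · rw [sub_self]; exact TwoSidedIdeal.zero_mem _
  · rw [← neg_sub]
    exact TwoSidedIdeal.neg_mem _ comm_z0
  · exact comm_z0
  · rw [sub_self]; exact TwoSidedIdeal.zero_mem _

lemma commJ (a b : Sphere n q) :
    a * b - b * a ∈ TwoSidedIdeal.span (Jset n q) := by
  refine Algebra.adjoin_induction₂ (s := G n q)
    (p := fun x y _ _ => x * y - y * x ∈ TwoSidedIdeal.span (Jset n q))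
    ?_ ?_ ?_ ?_ ?_ ?_ ?_ ?_ (mem_adjoin a) (mem_adjoin b)
  · intro x y hx hy; exact base_comm hx hy
  · intro r₁ r₂
    rw [← map_mul, ← map_mul, mul_comm, sub_self]
    exact TwoSidedIdeal.zero_mem _
  · intro r x _
    rw [Algebra.commutes, sub_self]
    exact TwoSidedIdeal.zero_mem _
  · intro r x _
    rw [← Algebra.commutes, sub_self]
    exact TwoSidedIdeal.zero_mem _
  · intro x y w _ _ _ h1 h2
    have e : (x + y) * w - w * (x + y) = (x * w - w * x) + (y * w - w * y) := by
      noncomm_ring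
    rw [e]
    exact TwoSidedIdeal.add_mem _ h1 h2
  · intro x y w _ _ _ h1 h2
    have e : x * (y + w) - (y + w) * x = (x * y - y * x) + (x * w - w * x) := by
      noncomm_ring
    rw [e]
    exact TwoSidedIdeal.add_mem _ h1 h2
  · intro x y w _ _ _ h1 h2
    have e : (x * y) * w - w * (x * y) = x * (y * w - w * y) + (x * w - w * x) * y := by
      simp only [mul_sub, sub_mul, mul_assoc]; abel
    rw [e]
    exact TwoSidedIdeal.add_mem _ (TwoSidedIdeal.mul_mem_left _ _ _ h2)
      (TwoSidedIdeal.mul_mem_right _ _ _ h1)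
  · intro x y w _ _ _ h1 h2
    have e : x * (y * w) - (y * w) * x = y * (x * w - w * x) + (x * y - y * x) * w := by
      simp only [mul_sub, sub_mul, mul_assoc]; abel
    rw [e]
    exact TwoSidedIdeal.add_mem _ (TwoSidedIdeal.mul_mem_left _ _ _ h2)
      (TwoSidedIdeal.mul_mem_right _ _ _ h1)

end Gen

/-- For `n ≥ 1` and `0 ≤ q < 1`, the commutator ideal of `A(S^{2n+1}_q)`
equals the two-sided *-ideal generated by `z 1, ..., z n`. -/
theorem commutatorIdeal_sphere_eq_span (n : ℕ) (hn : 1 ≤ n) (q : ℝ)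
    (hq0 : 0 ≤ q) (hq1 : q < 1) :
    commutatorIdeal (Sphere n q) =
      TwoSidedIdeal.span
        ({x | ∃ i : Fin (n + 1), i ≠ 0 ∧ x = z n q i} ∪
         {x | ∃ i : Fin (n + 1), i ≠ 0 ∧ x = star (z n q i)}) := by
  apply le_antisymm
  · intro x hx
    rw [commutatorIdeal] at hx
    refine TwoSidedIdeal.mem_span_iff.mp hx _ ?_
    rintro _ ⟨a, b, rfl⟩
    exact commJ a b
  · intro x hx
    refine TwoSidedIdeal.mem_span_iff.mp hx _ ?_
    rintro y (⟨i, hi, rfl⟩ | ⟨i, hi, rfl⟩)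
    · exact z_mem hq0 hq1 hi
    · exact star_mem_commutatorIdeal (z_mem hq0 hq1 hi)

end QAlg
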